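/- Let R = ℂ[[x,y,u,v]] be the formal power series ring in four variables over ℂ, and let A ⊆ R be the image of the ℂ-algebra substitution homomorphism ℂ[[T₁,T₂,T₃]] → R determined by T₁ ↦ xu, T₂ ↦ yv, T₃ ↦ xv + yu (each of these power series has zero constant term, so the substitution homomorphism is defined). Then the inclusion A ↪ R splits as a map of A-modules: there is an A-linear map π : R → A with π(a) = a for all a ∈ A. -/

import Mathlib

open MvPowerSeries Finsupp

/-- The substitution homomorphism `ℂ[[T₁,T₂,T₃]] → ℂ[[x,y,u,v]]` sending
`T₁ ↦ xu`, `T₂ ↦ yv`, `T₃ ↦ xv + yu`, described coefficientwise: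
the coefficient of the result at `e` is the (finitely supported) sum over
`n = (n₁,n₂,n₃)` of `(coeff n f) ·  coeff_e ((xu)^{n₁} (yv)^{n₂} (xv+yu)^{n₃})`. -/
noncomputable def substXYUV (f : MvPowerSeries (Fin 3) ℂ) : MvPowerSeries (Fin 4) ℂ :=
  fun e => ∑ᶠ n : Fin 3 →₀ ℕ,
    MvPowerSeries.coeff n f *
      MvPowerSeries.coeff e
        (((X 0 * X 2 : MvPowerSeries (Fin 4) ℂ) ^ n 0) *
          ((X 1 * X 3 : MvPowerSeries (Fin 4) ℂ) ^ n 1) *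
          ((X 0 * X 3 + X 1 * X 2 : MvPowerSeries (Fin 4) ℂ) ^ n 2))


noncomputable def fs4 (a b c d : ℕ) : Fin 4 →₀ ℕ :=
  Finsupp.equivFunOnFinite.symm ![a, b, c, d]

@[simp] lemma fs4_0 (a b c d : ℕ) : fs4 a b c d 0 = a := rfl
@[simp] lemma fs4_1 (a b c d : ℕ) : fs4 a b c d 1 = b := rfl
@[simp] lemma fs4_2 (a b c d : ℕ) : fs4 a b c d 2 = c := rfl
@[simp] lemma fs4_3 (a b c d : ℕ) : fs4 a b c d 3 = d := rfl

noncomputable def fs3 (a b c : ℕ) : Fin 3 →₀ ℕ :=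
  Finsupp.equivFunOnFinite.symm ![a, b, c]

@[simp] lemma fs3_0 (a b c : ℕ) : fs3 a b c 0 = a := rfl
@[simp] lemma fs3_1 (a b c : ℕ) : fs3 a b c 1 = b := rfl
@[simp] lemma fs3_2 (a b c : ℕ) : fs3 a b c 2 = c := rfl

noncomputable def Dnm (n : Fin 3 →₀ ℕ) (m : ℕ) : Fin 4 →₀ ℕ :=
  fs4 (n 0 + m) (n 1 + (n 2 - m)) (n 0 + (n 2 - m)) (n 1 + m)

noncomputable abbrev Mn (n : Fin 3 →₀ ℕ) : MvPowerSeries (Fin 4) ℂ :=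
  ((X 0 * X 2 : MvPowerSeries (Fin 4) ℂ) ^ n 0) *
          ((X 1 * X 3 : MvPowerSeries (Fin 4) ℂ) ^ n 1) *
          ((X 0 * X 3 + X 1 * X 2 : MvPowerSeries (Fin 4) ℂ) ^ n 2)

lemma Mform (n : Fin 3 →₀ ℕ) :
    Mn n = ∑ m ∈ Finset.range (n 2 + 1),
      monomial (Dnm n m) ((Nat.choose (n 2) m : ℂ)) := by
  unfold Mn
  rw [add_pow, Finset.mul_sum]
  refine Finset.sum_congr rfl fun m hm => ?_
  have hm' : m ≤ n 2 := Nat.lt_succ_iff.mp (Finset.mem_range.mp hm)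
  have key : ((X 0 * X 2 : MvPowerSeries (Fin 4) ℂ) ^ n 0) * ((X 1 * X 3) ^ n 1) *
      ((X 0 * X 3) ^ m * (X 1 * X 2) ^ (n 2 - m)) = monomial (Dnm n m) 1 := by
    simp only [mul_pow, X_pow_eq, monomial_mul_monomial, one_mul, mul_one]
    refine congrArg (fun d => monomial d (1:ℂ)) ?_
    ext i
    fin_cases i <;> simp [Dnm, Finsupp.single_apply] <;> omega
  have hc : ((Nat.choose (n 2) m : ℕ) : MvPowerSeries (Fin 4) ℂ)
      = (C : ℂ →+* MvPowerSeries (Fin 4) ℂ) ((Nat.choose (n 2) m : ℂ)) := (map_natCast ((C : ℂ →+* MvPowerSeries (Fin 4) ℂ)) _).symm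
  calc ((X 0 * X 2 : MvPowerSeries (Fin 4) ℂ) ^ n 0) * ((X 1 * X 3) ^ n 1) *
        ((X 0 * X 3) ^ m * (X 1 * X 2) ^ (n 2 - m) * ((Nat.choose (n 2) m : ℕ) : MvPowerSeries (Fin 4) ℂ))
      = (((X 0 * X 2 : MvPowerSeries (Fin 4) ℂ) ^ n 0) * ((X 1 * X 3) ^ n 1) *
        ((X 0 * X 3) ^ m * (X 1 * X 2) ^ (n 2 - m))) * (C : ℂ →+* MvPowerSeries (Fin 4) ℂ) ((Nat.choose (n 2) m : ℂ)) := by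
        rw [← hc]; ring
    _ = monomial (Dnm n m) 1 * monomial 0 ((Nat.choose (n 2) m : ℂ)) := by
        rw [key, monomial_zero_eq_C_apply]
    _ = monomial (Dnm n m) ((Nat.choose (n 2) m : ℂ)) := by
        rw [monomial_mul_monomial]; simp

lemma coeffMn (n : Fin 3 →₀ ℕ) (e : Fin 4 →₀ ℕ) :
    coeff e (Mn n) = ∑ m ∈ Finset.range (n 2 + 1),
      (if e = Dnm n m then (Nat.choose (n 2) m : ℂ) else 0) := by
  rw [Mform, map_sum]
  exact Finset.sum_congr rfl fun m _ => coeff_monomial _ _ _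

noncomputable def sig (e : Fin 4 →₀ ℕ) : Fin 4 →₀ ℕ := fs4 (e 2) (e 3) (e 0) (e 1)

def diag (e : Fin 4 →₀ ℕ) : Prop := e 0 + e 1 = e 2 + e 3

instance : DecidablePred diag := fun e => inferInstanceAs (Decidable (_ = _))

@[simp] lemma sig_sig (e : Fin 4 →₀ ℕ) : sig (sig e) = e := by
  ext i; fin_cases i <;> simp [sig]

lemma sig_inj {a b : Fin 4 →₀ ℕ} (h : sig a = sig b) : a = b := by
  have := congrArg sig h; simpa using this

lemma diag_sig {e : Fin 4 →₀ ℕ} : diag (sig e) ↔ diag e := by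
  unfold diag sig; simp; omega

lemma diag_Dnm (n : Fin 3 →₀ ℕ) {m : ℕ} (hm : m ≤ n 2) : diag (Dnm n m) := by
  unfold diag Dnm; simp; omega

lemma sig_Dnm (n : Fin 3 →₀ ℕ) {m : ℕ} (hm : m ≤ n 2) :
    sig (Dnm n m) = Dnm n (n 2 - m) := by
  ext i; fin_cases i <;> simp [sig, Dnm] <;> omega

lemma substXYUV_apply (f : MvPowerSeries (Fin 3) ℂ) (e : Fin 4 →₀ ℕ) :
    substXYUV f e = ∑ᶠ n : Fin 3 →₀ ℕ, f n * coeff e (Mn n) := rfl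

lemma substXYUV_notdiag (f : MvPowerSeries (Fin 3) ℂ) {e : Fin 4 →₀ ℕ} (he : ¬ diag e) :
    substXYUV f e = 0 := by
  rw [substXYUV_apply]
  have : ∀ n : Fin 3 →₀ ℕ, f n * coeff e (Mn n) = 0 := by
    intro n
    rw [coeffMn]
    rw [Finset.sum_eq_zero, mul_zero]
    intro m hm
    rw [if_neg]
    rintro rfl
    exact he (diag_Dnm n (Nat.lt_succ_iff.mp (Finset.mem_range.mp hm)))
  simp only [this, finsum_zero]

lemma coeffMn_sig (n : Fin 3 →₀ ℕ) (e : Fin 4 →₀ ℕ) :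
    coeff (sig e) (Mn n) = coeff e (Mn n) := by
  rw [coeffMn, coeffMn, ← Finset.sum_range_reflect]
  refine Finset.sum_congr rfl fun m hm => ?_
  have hm' : m ≤ n 2 := Nat.lt_succ_iff.mp (Finset.mem_range.mp hm)
  have h1 : n 2 + 1 - 1 - m = n 2 - m := by omega
  rw [h1, Nat.choose_symm hm']
  rw [← sig_Dnm n hm']
  exact if_congr ⟨fun h => sig_inj h, fun h => by rw [h]⟩ rfl rfl

lemma substXYUV_sig (f : MvPowerSeries (Fin 3) ℂ) (e : Fin 4 →₀ ℕ) :
    substXYUV f (sig e) = substXYUV f e := by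
  rw [substXYUV_apply, substXYUV_apply]
  exact finsum_congr fun n => by rw [coeffMn_sig]

noncomputable def e4 (i j k : ℕ) : Fin 4 →₀ ℕ := fs4 i (j + k) (i + k) j

noncomputable def hrec (s : MvPowerSeries (Fin 4) ℂ) (i j k : ℕ) : ℂ :=
  s (e4 i j k) - ∑ m ∈ (Finset.Icc 1 (min i j)).attach,
    (Nat.choose (k + 2 * m.1) m.1 : ℂ) * hrec s (i - m.1) (j - m.1) (k + 2 * m.1)
termination_by i
decreasing_by
  have := m.2
  simp only [Finset.mem_Icc] at this
  omega

lemma hrec_eq (s : MvPowerSeries (Fin 4) ℂ) (i j k : ℕ) :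
    hrec s i j k = s (e4 i j k) - ∑ m ∈ Finset.Icc 1 (min i j),
      (Nat.choose (k + 2 * m) m : ℂ) * hrec s (i - m) (j - m) (k + 2 * m) := by
  rw [hrec]
  exact congrArg (s (e4 i j k) - ·) (Finset.sum_attach (Finset.Icc 1 (min i j))
    (fun m => (Nat.choose (k + 2 * m) m : ℂ) * hrec s (i - m) (j - m) (k + 2 * m)))

noncomputable def gFor (s : MvPowerSeries (Fin 4) ℂ) : MvPowerSeries (Fin 3) ℂ :=
  fun n => hrec s (n 0) (n 1) (n 2)

noncomputable def Nm (a d k m : ℕ) : Fin 3 →₀ ℕ := fs3 (a - m) (d - m) (k + 2 * m)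

lemma key_calc (s : MvPowerSeries (Fin 4) ℂ) (e : Fin 4 →₀ ℕ) (hde : diag e) (hbd : e 3 ≤ e 1) :
    substXYUV (gFor s) e = s e := by
  unfold diag at hde
  have hsupp : (Function.support fun n => gFor s n * coeff e (Mn n)) ⊆
      ↑((Finset.range (min (e 0) (e 3) + 1)).image (Nm (e 0) (e 3) (e 1 - e 3))) := by
    intro n hn
    have hco : coeff e (Mn n) ≠ 0 := by
      intro h; exact hn (by simp [Function.mem_support, h])
    rw [coeffMn] at hco
    obtain ⟨m, hm, hne⟩ := Finset.exists_ne_zero_of_sum_ne_zero hco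
    have hm2 : m ≤ n 2 := Nat.lt_succ_iff.mp (Finset.mem_range.mp hm)
    have hDe : e = Dnm n m := by by_contra h; rw [if_neg h] at hne; exact hne rfl
    have h0 : e 0 = n 0 + m := by rw [hDe]; simp [Dnm]
    have h1 : e 1 = n 1 + (n 2 - m) := by rw [hDe]; simp [Dnm]
    have h2 : e 2 = n 0 + (n 2 - m) := by rw [hDe]; simp [Dnm]
    have h3 : e 3 = n 1 + m := by rw [hDe]; simp [Dnm]
    simp only [Finset.coe_image, Set.mem_image, Finset.mem_coe, Finset.mem_range]
    refine ⟨m, by omega, ?_⟩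
    ext i
    fin_cases i <;> simp [Nm] <;> omega
  rw [substXYUV_apply, finsum_eq_sum_of_support_subset _ hsupp,
    Finset.sum_image (f := fun n => gFor s n * coeff e (Mn n))
      (g := Nm (e 0) (e 3) (e 1 - e 3)) ?hinj]
  case hinj =>
    intro m1 _ m2 _ hEq
    have := DFunLike.congr_fun hEq (2 : Fin 3)
    simp [Nm] at this
    omega
  have hcoeff : ∀ m ∈ Finset.range (min (e 0) (e 3) + 1),
      gFor s (Nm (e 0) (e 3) (e 1 - e 3) m) * coeff e (Mn (Nm (e 0) (e 3) (e 1 - e 3) m)) =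
      (Nat.choose ((e 1 - e 3) + 2 * m) m : ℂ) *
        hrec s (e 0 - m) (e 3 - m) ((e 1 - e 3) + 2 * m) := by
    intro m hm
    rw [Finset.mem_range, Nat.lt_succ_iff] at hm
    have hgf : gFor s (Nm (e 0) (e 3) (e 1 - e 3) m) =
        hrec s (e 0 - m) (e 3 - m) ((e 1 - e 3) + 2 * m) := by
      simp [gFor, Nm]
    have hcf : coeff e (Mn (Nm (e 0) (e 3) (e 1 - e 3) m)) =
        (Nat.choose ((e 1 - e 3) + 2 * m) m : ℂ) := by
      rw [coeffMn]
      have hN2 : (Nm (e 0) (e 3) (e 1 - e 3) m) 2 = (e 1 - e 3) + 2 * m := by simp [Nm]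
      rw [hN2]
      rw [Finset.sum_eq_single_of_mem m (Finset.mem_range.mpr (by omega))]
      · rw [if_pos]
        ext i
        fin_cases i <;> simp [Dnm, Nm] <;> omega
      · intro m' _ hne
        rw [if_neg]
        intro hEq
        have hq0 := DFunLike.congr_fun hEq (0 : Fin 4)
        have hq3 := DFunLike.congr_fun hEq (3 : Fin 4)
        simp [Dnm, Nm] at hq0 hq3
        omega
    rw [hgf, hcf]; ring
  rw [Finset.sum_congr rfl hcoeff]
  have hins : Finset.range (min (e 0) (e 3) + 1) = insert 0 (Finset.Icc 1 (min (e 0) (e 3))) := by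
    ext x; simp only [Finset.mem_range, Finset.mem_insert, Finset.mem_Icc]; omega
  rw [hins, Finset.sum_insert (by simp)]
  simp only [Nat.mul_zero, Nat.add_zero, Nat.choose_zero_right, Nat.cast_one, one_mul,
    Nat.sub_zero]
  rw [hrec_eq]
  have he4 : e4 (e 0) (e 3) (e 1 - e 3) = e := by
    ext i; fin_cases i <;> simp [e4] <;> omega
  rw [he4]
  ring

lemma subst_gFor (s : MvPowerSeries (Fin 4) ℂ)
    (hd : ∀ e, ¬ diag e → s e = 0) (hs : ∀ e, s (sig e) = s e) :
    substXYUV (gFor s) = s := by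
  funext e
  by_cases hde : diag e
  · by_cases hbd : e 3 ≤ e 1
    · exact key_calc s e hde hbd
    · have h1 : substXYUV (gFor s) e = substXYUV (gFor s) (sig e) :=
        (substXYUV_sig (gFor s) e).symm
      rw [h1, key_calc s (sig e) (diag_sig.mpr hde) (by simp [sig]; omega), hs]
  · rw [substXYUV_notdiag _ hde, hd e hde]

noncomputable def pr (r : MvPowerSeries (Fin 4) ℂ) : MvPowerSeries (Fin 4) ℂ :=
  fun e => if diag e then (r e + r (sig e)) / 2 else 0

lemma pr_notdiag (r : MvPowerSeries (Fin 4) ℂ) {e : Fin 4 →₀ ℕ} (he : ¬ diag e) :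
    pr r e = 0 := if_neg he

lemma pr_sig (r : MvPowerSeries (Fin 4) ℂ) (e : Fin 4 →₀ ℕ) : pr r (sig e) = pr r e := by
  unfold pr
  rw [sig_sig]
  by_cases h : diag e
  · rw [if_pos (diag_sig.mpr h), if_pos h]; ring
  · rw [if_neg (fun hc => h (diag_sig.mp hc)), if_neg h]

lemma pr_mem (r : MvPowerSeries (Fin 4) ℂ) : pr r ∈ Set.range substXYUV :=
  ⟨gFor (pr r), subst_gFor (pr r) (fun _ he => pr_notdiag r he) (pr_sig r)⟩

lemma sig_add (p q : Fin 4 →₀ ℕ) : sig (p + q) = sig p + sig q := by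
  ext i; fin_cases i <;> simp [sig]

lemma mul_apply' (φ ψ : MvPowerSeries (Fin 4) ℂ) (e : Fin 4 →₀ ℕ) :
    (φ * ψ) e = ∑ p ∈ Finset.HasAntidiagonal.antidiagonal e, φ p.1 * ψ p.2 :=
  coeff_mul e φ ψ

lemma sum_antidiag_sig (e : Fin 4 →₀ ℕ) (F : (Fin 4 →₀ ℕ) × (Fin 4 →₀ ℕ) → ℂ) :
    ∑ p ∈ Finset.HasAntidiagonal.antidiagonal (sig e), F p = ∑ p ∈ Finset.HasAntidiagonal.antidiagonal e, F (sig p.1, sig p.2) := by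
  refine Finset.sum_nbij' (fun p => (sig p.1, sig p.2)) (fun p => (sig p.1, sig p.2))
    ?_ ?_ ?_ ?_ ?_
  · intro p hp
    rw [Finset.HasAntidiagonal.mem_antidiagonal] at hp ⊢
    rw [← sig_add, hp, sig_sig]
  · intro p hp
    rw [Finset.HasAntidiagonal.mem_antidiagonal] at hp ⊢
    rw [← sig_add, hp]
  · intro p _; simp
  · intro p _; simp
  · intro p _; simp

/-- Let `R = ℂ[[x,y,u,v]]` and let `A` be the image of the
substitution homomorphism `ℂ[[T₁,T₂,T₃]] → R`, `T₁ ↦ xu`, `T₂ ↦ yv`,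
`T₃ ↦ xv + yu` (so `A = ℂ[[xu, yv, xv+yu]]`).  Then the inclusion `A ↪ R`
splits as a map of `A`-modules: there is an `A`-linear retraction `π : R → A`. -/
theorem subalgebra_splits :
    ∃ π : MvPowerSeries (Fin 4) ℂ → MvPowerSeries (Fin 4) ℂ,
      (∀ r, π r ∈ Set.range substXYUV) ∧
      (∀ a ∈ Set.range substXYUV, π a = a) ∧
      (∀ r s : MvPowerSeries (Fin 4) ℂ, π (r + s) = π r + π s) ∧
      (∀ a ∈ Set.range substXYUV, ∀ r : MvPowerSeries (Fin 4) ℂ, π (a * r) = a * π r) := by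
  refine ⟨pr, pr_mem, ?_, ?_, ?_⟩
  · rintro a ⟨g, rfl⟩
    funext e
    by_cases h : diag e
    · rw [show pr (substXYUV g) e = _ from if_pos h, substXYUV_sig]
      ring
    · rw [pr_notdiag _ h, substXYUV_notdiag g h]
  · intro r s
    funext e
    show pr (r + s) e = pr r e + pr s e
    unfold pr
    by_cases h : diag e
    · rw [if_pos h, if_pos h, if_pos h]
      show ((r e + s e) + (r (sig e) + s (sig e))) / 2 = _
      ring
    · rw [if_neg h, if_neg h, if_neg h]; ring
  · rintro a ⟨g, rfl⟩ r
    set A := substXYUV g with hA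
    have hA1 : ∀ p, ¬ diag p → A p = 0 := fun p hp => substXYUV_notdiag g hp
    have hA2 : ∀ p, A (sig p) = A p := fun p => substXYUV_sig g p
    funext e
    show pr (A * r) e = (A * pr r) e
    rw [mul_apply' A (pr r) e]
    by_cases h : diag e
    · rw [show pr (A * r) e = ((A * r) e + (A * r) (sig e)) / 2 from if_pos h]
      rw [mul_apply' A r e, mul_apply' A r (sig e), sum_antidiag_sig e (fun p => A p.1 * r p.2)]
      rw [← Finset.sum_add_distrib, Finset.sum_div]
      refine Finset.sum_congr rfl fun p hp => ?_
      rw [Finset.HasAntidiagonal.mem_antidiagonal] at hp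
      by_cases hA0 : A p.1 = 0
      · rw [hA0, hA2 p.1, hA0, zero_mul, zero_mul, zero_mul, add_zero, zero_div]
      · have hdp1 : diag p.1 := by
          by_contra hc; exact hA0 (hA1 p.1 hc)
        have hdp2 : diag p.2 := by
          unfold diag at h hdp1 ⊢
          have h0 := DFunLike.congr_fun hp (0 : Fin 4)
          have h1 := DFunLike.congr_fun hp (1 : Fin 4)
          have h2 := DFunLike.congr_fun hp (2 : Fin 4)
          have h3 := DFunLike.congr_fun hp (3 : Fin 4)
          simp only [Finsupp.add_apply] at h0 h1 h2 h3
          omega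
        rw [hA2 p.1, show pr r p.2 = _ from if_pos hdp2]
        ring
    · rw [pr_notdiag _ h]
      symm
      refine Finset.sum_eq_zero fun p hp => ?_
      rw [Finset.HasAntidiagonal.mem_antidiagonal] at hp
      by_cases hA0 : A p.1 = 0
      · rw [hA0, zero_mul]
      · have hdp1 : diag p.1 := by by_contra hc; exact hA0 (hA1 p.1 hc)
        have hdp2 : ¬ diag p.2 := by
          unfold diag at h hdp1 ⊢
          have h0 := DFunLike.congr_fun hp (0 : Fin 4)
          have h1 := DFunLike.congr_fun hp (1 : Fin 4)
          have h2 := DFunLike.congr_fun hp (2 : Fin 4)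
          have h3 := DFunLike.congr_fun hp (3 : Fin 4)
          simp only [Finsupp.add_apply] at h0 h1 h2 h3
          omega
        rw [pr_notdiag _ hdp2, mul_zero]
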